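/- If γ, δ ∈ H_β for some β in the Kostant cascade of a semisimple Lie algebra and γ + δ is a root, then γ + δ = β. -/

import Mathlib

/- Kostant cascade machinery for a root system in a real inner product space. -/

open scoped RealInnerProductSpace

variable {V : Type*} [NormedAddCommGroup V] [InnerProductSpace ℝ V]

/-- Two roots of `Rs` are linked if they are not orthogonal. -/
def Linked (Rs : Set V) (a b : V) : Prop := a ∈ Rs ∧ b ∈ Rs ∧ ⟪a, b⟫ ≠ 0

/-- `C` is an irreducible component of the root subsystem `Rs` :
it is a connectedness class of the non-orthogonality relation. -/
def IsComponent (Rs : Set V) (C : Set V) : Prop :=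
  ∃ a ∈ Rs, C = {b | Relation.ReflTransGen (Linked Rs) a b}

/-- `β` is the highest root of the (irreducible) subsystem `C` of `Rs`
with respect to the positive system `pos`. -/
def IsHighestRoot (Rs pos C : Set V) (β : V) : Prop :=
  β ∈ C ∧ β ∈ pos ∧ ∀ α ∈ C, α ∈ pos → β + α ∉ Rs

/-- The subsystems occurring in the recursive construction of the Kostant cascade:
irreducible components of `Rs`, and recursively irreducible components of the
orthogonal complement of the highest root of a cascade subsystem. -/
inductive CascadeSub (Rs pos : Set V) : Set V → Prop
  | base (C : Set V) : IsComponent Rs C → CascadeSub Rs pos C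
  | step (K C : Set V) (β : V) : CascadeSub Rs pos K → IsHighestRoot Rs pos K β →
      IsComponent {α ∈ K | ⟪α, β⟫ = 0} C → CascadeSub Rs pos C

/-- The Kostant cascade `β_π` : the highest roots of the cascade subsystems. -/
def cascadeSet (Rs pos : Set V) : Set V :=
  {β | ∃ K, CascadeSub Rs pos K ∧ IsHighestRoot Rs pos K β}

/-- `H_β = {α ∈ Δ_K : (α, β) > 0}` where `Δ_K` is the cascade subsystem with
highest root `β`. -/
def cascadeH (Rs pos : Set V) (β : V) : Set V :=
  {α | ∃ K, CascadeSub Rs pos K ∧ IsHighestRoot Rs pos K β ∧ α ∈ K ∧ 0 < ⟪α, β⟫}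

/-- `Rs` is a (reduced, crystallographic) root system, as the set of roots of a
semisimple Lie algebra. -/
structure IsRootSystem (Rs : Set V) : Prop where
  finite : Rs.Finite
  ne_zero : (0 : V) ∉ Rs
  neg_mem : ∀ α ∈ Rs, -α ∈ Rs
  reduced : ∀ α ∈ Rs, ∀ t : ℝ, t • α ∈ Rs → t = 1 ∨ t = -1
  crystallographic : ∀ α ∈ Rs, ∀ β ∈ Rs, ∃ z : ℤ, 2 * ⟪β, α⟫ / ⟪α, α⟫ = (z : ℝ)
  reflect_mem : ∀ α ∈ Rs, ∀ β ∈ Rs, β - (2 * ⟪β, α⟫ / ⟪α, α⟫) • α ∈ Rs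

/-- `pos` is a system of positive roots for `Rs`. -/
structure IsPositiveSystem (Rs pos : Set V) : Prop where
  subset : pos ⊆ Rs
  pos_iff : ∀ α ∈ Rs, (α ∈ pos ↔ -α ∉ pos)
  add_mem : ∀ α ∈ pos, ∀ β ∈ pos, α + β ∈ Rs → α + β ∈ pos


/-! ### Auxiliary lemmas -/

section Aux

variable {Rs pos K : Set V}

lemma linked_symm {S : Set V} {a b : V} (h : Linked S a b) : Linked S b a :=
  ⟨h.2.1, h.1, by rw [real_inner_comm]; exact h.2.2⟩

lemma rtg_symm {α : Type*} {r : α → α → Prop} (hs : ∀ {a b}, r a b → r b a) {a b : α}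
    (h : Relation.ReflTransGen r a b) : Relation.ReflTransGen r b a := by
  induction h with
  | refl => exact .refl
  | tail _ h2 ih => exact Relation.ReflTransGen.head (hs h2) ih

lemma comp_subset {S C : Set V} (hC : IsComponent S C) : C ⊆ S := by
  obtain ⟨a, ha, rfl⟩ := hC
  intro b hb
  induction hb with
  | refl => exact ha
  | tail _ h2 => exact h2.2.1

lemma comp_nonempty {S C : Set V} (hC : IsComponent S C) : C.Nonempty := by
  obtain ⟨a, _, rfl⟩ := hC; exact ⟨a, Relation.ReflTransGen.refl⟩

lemma comp_absorb {S C : Set V} (hC : IsComponent S C) {y w : V} (hy : y ∈ C)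
    (hw : w ∈ S) (hyw : ⟪y, w⟫ ≠ 0) : w ∈ C := by
  have hyS : y ∈ S := comp_subset hC hy
  obtain ⟨a, _, rfl⟩ := hC
  exact Relation.ReflTransGen.tail hy ⟨hyS, hw, hyw⟩

lemma comp_unique {S C₁ C₂ : Set V} (h1 : IsComponent S C₁) (h2 : IsComponent S C₂)
    {x : V} (hx1 : x ∈ C₁) (hx2 : x ∈ C₂) : C₁ = C₂ := by
  obtain ⟨a, _, rfl⟩ := h1
  obtain ⟨b, _, rfl⟩ := h2
  have hax : Relation.ReflTransGen (Linked S) a x := hx1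
  have hbx : Relation.ReflTransGen (Linked S) b x := hx2
  ext c
  constructor
  · intro hc
    exact (hbx.trans (rtg_symm (fun h => linked_symm h) hax)).trans hc
  · intro hc
    exact (hax.trans (rtg_symm (fun h => linked_symm h) hbx)).trans hc

lemma comp_conn {S C : Set V} (hC : IsComponent S C) {x y : V} (hx : x ∈ C) (hy : y ∈ C) :
    Relation.ReflTransGen (Linked C) x y := by
  obtain ⟨a, _, rfl⟩ := hC
  have key : ∀ b, Relation.ReflTransGen (Linked S) a b →
      Relation.ReflTransGen (Linked {b | Relation.ReflTransGen (Linked S) a b}) a b := by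
    intro b hb
    induction hb with
    | tail h1 h2 ih =>
      exact Relation.ReflTransGen.tail ih ⟨h1, Relation.ReflTransGen.tail h1 h2, h2.2.2⟩
    | refl => exact .refl
  exact (rtg_symm (fun h => linked_symm h) (key x hx)).trans (key y hy)

lemma cascade_subset (h : CascadeSub Rs pos K) : K ⊆ Rs := by
  induction h with
  | base C hC => exact comp_subset hC
  | step K C β hK hb hC ih => exact fun x hx => ih (comp_subset hC hx).1

lemma cascade_conn (h : CascadeSub Rs pos K) {x y : V} (hx : x ∈ K) (hy : y ∈ K) :
    Relation.ReflTransGen (Linked K) x y := by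
  cases h with
  | base C hC => exact comp_conn hC hx hy
  | step K' C β hK hb hC => exact comp_conn hC hx hy

lemma cascade_neg (hRS : IsRootSystem Rs) (h : CascadeSub Rs pos K) :
    ∀ x ∈ K, -x ∈ K := by
  induction h with
  | base C hC =>
    intro x hx
    have hxRs : x ∈ Rs := comp_subset hC hx
    have hx0 : x ≠ 0 := fun h0 => hRS.ne_zero (h0 ▸ hxRs)
    refine comp_absorb hC hx (hRS.neg_mem x hxRs) ?_
    rw [inner_neg_right, neg_ne_zero]
    exact inner_self_ne_zero.mpr hx0
  | step K' C β hK hb hC ih =>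
    intro x hx
    have hxS := comp_subset hC hx
    have hnx : -x ∈ {α ∈ K' | ⟪α, β⟫ = 0} :=
      ⟨ih x hxS.1, by rw [inner_neg_left, hxS.2, neg_zero]⟩
    have hx0 : x ≠ 0 := fun h0 => hRS.ne_zero (h0 ▸ cascade_subset hK hxS.1)
    refine comp_absorb hC hx hnx ?_
    rw [inner_neg_right, neg_ne_zero]
    exact inner_self_ne_zero.mpr hx0

lemma cascade_span_mem (hRS : IsRootSystem Rs) (h : CascadeSub Rs pos K) :
    ∀ w ∈ Rs, w ∈ Submodule.span ℝ K → ∀ z ∈ K, ⟪z, w⟫ ≠ 0 → w ∈ K := by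
  induction h with
  | base C hC =>
    intro w hw _ z hz hzw
    exact comp_absorb hC hz hw hzw
  | step K' C β hK hb hC ih =>
    intro w hw hspan z hz hzw
    have hCsub : C ⊆ {α ∈ K' | ⟪α, β⟫ = 0} := comp_subset hC
    have hwK' : w ∈ K' :=
      ih w hw (Submodule.span_mono (fun u hu => (hCsub hu).1) hspan) z (hCsub hz).1 hzw
    have hwβ : ⟪w, β⟫ = 0 := by
      refine Submodule.span_induction (fun u hu => (hCsub hu).2) ?_ ?_ ?_ hspan
      · simp
      · intro u v _ _ h1 h2; rw [inner_add_left, h1, h2, add_zero]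
      · intro r u _ h1; rw [real_inner_smul_left, h1, mul_zero]
    exact comp_absorb hC hz ⟨hwK', hwβ⟩ hzw

lemma conn_sub {S C : Set V} (hC : IsComponent S C) (hK : CascadeSub Rs pos K)
    (hKS : K ⊆ S) {x : V} (hxK : x ∈ K) (hxC : x ∈ C) : K ⊆ C := by
  intro y hy
  have h1 : Relation.ReflTransGen (Linked K) x y := cascade_conn hK hxK hy
  have h2 : Relation.ReflTransGen (Linked S) x y :=
    Relation.ReflTransGen.mono (p := Linked S)
      (fun a b (hab : Linked K a b) => ⟨hKS hab.1, hKS hab.2.1, hab.2.2⟩) x y h1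
  obtain ⟨a, _, rfl⟩ := hC
  exact Relation.ReflTransGen.trans hxC h2

/-! ### Root system arithmetic -/

lemma mem_ne_zero (hRS : IsRootSystem Rs) {α : V} (hα : α ∈ Rs) : α ≠ 0 :=
  fun h0 => hRS.ne_zero (h0 ▸ hα)

lemma inner_self_pos' (hRS : IsRootSystem Rs) {α : V} (hα : α ∈ Rs) : 0 < ⟪α, α⟫ :=
  lt_of_le_of_ne real_inner_self_nonneg (Ne.symm (inner_self_ne_zero.mpr (mem_ne_zero hRS hα)))

lemma cs_lt (hRS : IsRootSystem Rs) {α β : V} (hα : α ∈ Rs) (hβ : β ∈ Rs)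
    (h1 : α ≠ β) (h2 : α ≠ -β) : ⟪α, β⟫ ^ 2 < ⟪α, α⟫ * ⟪β, β⟫ := by
  have hle := real_inner_mul_inner_self_le α β
  rcases lt_or_eq_of_le hle with h | h
  · rw [sq]; exact h
  · exfalso
    have hBpos : 0 < ⟪β, β⟫ := inner_self_pos' hRS hβ
    have hvv : ⟪(⟪β, β⟫ • α - ⟪α, β⟫ • β), (⟪β, β⟫ • α - ⟪α, β⟫ • β)⟫ = 0 := by
      rw [inner_sub_left, inner_sub_right, inner_sub_right, real_inner_smul_left,
        real_inner_smul_left, real_inner_smul_left, real_inner_smul_left,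
        real_inner_smul_right, real_inner_smul_right, real_inner_smul_right,
        real_inner_smul_right, real_inner_comm α β]
      linear_combination (⟪β, β⟫ : ℝ) * h.symm
    have hv0 : ⟪β, β⟫ • α - ⟪α, β⟫ • β = 0 := inner_self_eq_zero.mp hvv
    have heq : ⟪β, β⟫ • α = ⟪α, β⟫ • β := sub_eq_zero.mp hv0
    have ht : ((⟪α, β⟫ / ⟪β, β⟫) : ℝ) • β = α := by
      rw [div_eq_inv_mul, mul_smul, ← heq, smul_smul, inv_mul_cancel₀ (ne_of_gt hBpos), one_smul]
    rcases hRS.reduced β hβ _ (ht ▸ hα) with h' | h'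
    · exact h1 (by rw [← ht, h', one_smul])
    · exact h2 (by rw [← ht, h', neg_one_smul])

lemma cartan_int (hRS : IsRootSystem Rs) {α β : V} (hα : α ∈ Rs) (hβ : β ∈ Rs) :
    ∃ z : ℤ, 2 * ⟪α, β⟫ = z * ⟪β, β⟫ := by
  obtain ⟨z, hz⟩ := hRS.crystallographic β hβ α hα
  rw [div_eq_iff (ne_of_gt (inner_self_pos' hRS hβ))] at hz
  exact ⟨z, hz⟩

lemma cartan_facts (hRS : IsRootSystem Rs) {α β : V} (hα : α ∈ Rs) (hβ : β ∈ Rs)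
    (h1 : α ≠ β) (h2 : α ≠ -β) (hip : 0 < ⟪α, β⟫) :
    ∃ z₁ z₂ : ℤ, 2 * ⟪α, β⟫ = z₁ * ⟪β, β⟫ ∧ 2 * ⟪α, β⟫ = z₂ * ⟪α, α⟫ ∧
      1 ≤ z₁ ∧ 1 ≤ z₂ ∧ z₁ * z₂ ≤ 3 := by
  have hA := inner_self_pos' hRS hα
  have hB := inner_self_pos' hRS hβ
  obtain ⟨z₁, e₁⟩ := cartan_int hRS hα hβ
  obtain ⟨z₂, e₂⟩ := cartan_int hRS hβ hα
  rw [real_inner_comm α β] at e₂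
  have hcs := cs_lt hRS hα hβ h1 h2
  have hz₁R : (0:ℝ) < z₁ := by
    rcases mul_pos_iff.mp (show (0:ℝ) < (z₁:ℝ) * ⟪β, β⟫ by linarith) with ⟨h, _⟩ | ⟨_, h⟩
    · exact h
    · linarith
  have hz₂R : (0:ℝ) < z₂ := by
    rcases mul_pos_iff.mp (show (0:ℝ) < (z₂:ℝ) * ⟪α, α⟫ by linarith) with ⟨h, _⟩ | ⟨_, h⟩
    · exact h
    · linarith
  have hz₁ : 1 ≤ z₁ := by
    have h0 : (0:ℤ) < z₁ := by exact_mod_cast hz₁R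
    omega
  have hz₂ : 1 ≤ z₂ := by
    have h0 : (0:ℤ) < z₂ := by exact_mod_cast hz₂R
    omega
  have key : 4 * ⟪α, β⟫ ^ 2 = (z₁:ℝ) * z₂ * (⟪α, α⟫ * ⟪β, β⟫) := by
    linear_combination (2 * ⟪α, β⟫) * e₂ + ((z₂:ℝ) * ⟪α, α⟫) * e₁
  have hAB : 0 < ⟪α, α⟫ * ⟪β, β⟫ := mul_pos hA hB
  have hlt : (z₁:ℝ) * z₂ < 4 := by nlinarith [key, hcs, hAB]
  have hprod : z₁ * z₂ ≤ 3 := by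
    have h4 : (z₁ * z₂ : ℤ) < 4 := by exact_mod_cast hlt
    omega
  exact ⟨z₁, z₂, e₁, e₂, hz₁, hz₂, hprod⟩

lemma root_sub_mem (hRS : IsRootSystem Rs) {α β : V} (hα : α ∈ Rs) (hβ : β ∈ Rs)
    (hip : 0 < ⟪α, β⟫) : α = β ∨ α - β ∈ Rs := by
  by_cases h1 : α = β
  · exact Or.inl h1
  right
  have hB := inner_self_pos' hRS hβ
  have hA := inner_self_pos' hRS hα
  have h2 : α ≠ -β := by
    intro he; rw [he, inner_neg_left] at hip; linarith
  obtain ⟨z₁, z₂, e₁, e₂, hz₁, hz₂, hprod⟩ := cartan_facts hRS hα hβ h1 h2 hip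
  have hcase : z₁ = 1 ∨ z₂ = 1 := by
    by_contra hc
    push_neg at hc
    have ha2 : 2 ≤ z₁ := by omega
    have hb2 : 2 ≤ z₂ := by omega
    nlinarith
  rcases hcase with hz | hz
  · have hr := hRS.reflect_mem β hβ α hα
    have hcoef : 2 * ⟪α, β⟫ / ⟪β, β⟫ = 1 := by
      rw [e₁, hz]; push_cast; rw [one_mul, div_self (ne_of_gt hB)]
    rwa [hcoef, one_smul] at hr
  · have hr := hRS.reflect_mem α hα β hβ
    have hcoef : 2 * ⟪β, α⟫ / ⟪α, α⟫ = 1 := by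
      rw [real_inner_comm α β, e₂, hz]; push_cast; rw [one_mul, div_self (ne_of_gt hA)]
    rw [hcoef, one_smul] at hr
    have := hRS.neg_mem _ hr
    rwa [neg_sub] at this

lemma root_add_mem (hRS : IsRootSystem Rs) {α β : V} (hα : α ∈ Rs) (hβ : β ∈ Rs)
    (h : ⟪α, β⟫ < 0) : α = -β ∨ α + β ∈ Rs := by
  have := root_sub_mem hRS hα (hRS.neg_mem β hβ) (by rw [inner_neg_right]; linarith)
  rcases this with h1 | h1
  · exact Or.inl h1
  · right; rwa [sub_neg_eq_add] at h1


/-! ### The key Cartan-integer claim -/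

lemma main_claim (hRS : IsRootSystem Rs) (hpos : IsPositiveSystem Rs pos) {β α : V}
    (hK : CascadeSub Rs pos K) (hb : IsHighestRoot Rs pos K β)
    (hα : α ∈ K) (hip : 0 < ⟪α, β⟫) (hne : α ≠ β) :
    2 * ⟪α, β⟫ = ⟪β, β⟫ ∧ α ∈ pos ∧ β - α ∈ K ∧ β - α ∈ pos := by
  obtain ⟨hβK, hβpos, high⟩ := hb
  have hKRs := cascade_subset hK
  have hαRs : α ∈ Rs := hKRs hα
  have hβRs : β ∈ Rs := hKRs hβK
  have hA : 0 < ⟪α, α⟫ := inner_self_pos' hRS hαRs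
  have hB : 0 < ⟪β, β⟫ := inner_self_pos' hRS hβRs
  have hnb : α ≠ -β := by intro he; rw [he, inner_neg_left] at hip; linarith
  have hcs := cs_lt hRS hαRs hβRs hne hnb
  obtain ⟨z₁, z₂, e₁, e₂, hz₁, hz₂, hprod⟩ := cartan_facts hRS hαRs hβRs hne hnb hip
  -- Step A : β - α is a root
  have hwRs : β - α ∈ Rs := by
    rcases root_sub_mem hRS hαRs hβRs hip with h | h
    · exact absurd h hne
    · have := hRS.neg_mem _ h
      rwa [neg_sub] at this
  -- Step A' : β - α ∈ K
  have hwK : β - α ∈ K := by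
    have hwspan : β - α ∈ Submodule.span ℝ K :=
      sub_mem (Submodule.subset_span hβK) (Submodule.subset_span hα)
    by_cases hl1 : ⟪β, β - α⟫ = 0
    · by_cases hl2 : ⟪α, β - α⟫ = 0
      · exfalso
        rw [inner_sub_right] at hl1 hl2
        rw [real_inner_comm α β] at hl1
        nlinarith [hcs]
      · exact cascade_span_mem hRS hK _ hwRs hwspan α hα hl2
    · exact cascade_span_mem hRS hK _ hwRs hwspan β hβK hl1
  -- Step B : α is positive
  have hαpos : α ∈ pos := by
    by_contra hc
    have hnα : -α ∈ pos := by
      have hiff := hpos.pos_iff (-α) (hRS.neg_mem α hαRs)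
      rw [neg_neg] at hiff
      exact hiff.mpr hc
    exact high (-α) (cascade_neg hRS hK α hα) hnα (by rwa [← sub_eq_add_neg])
  -- Step C : β - α is positive
  have hwpos : β - α ∈ pos := by
    by_contra hc
    have hmemRs : α - β ∈ Rs := by
      have := hRS.neg_mem _ hwRs
      rwa [neg_sub] at this
    have hpos2 : α - β ∈ pos := by
      have hiff := hpos.pos_iff (α - β) hmemRs
      rw [neg_sub] at hiff
      exact hiff.mpr hc
    have hmemK : α - β ∈ K := by
      have := cascade_neg hRS hK _ hwK
      rwa [neg_sub] at this
    have hnot := high (α - β) hmemK hpos2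
    have he : β + (α - β) = α := by abel
    rw [he] at hnot
    exact hnot hαRs
  -- Step D : the Cartan integer is 1
  have hz₁1 : z₁ = 1 := by
    by_contra hz
    have hz2 : 2 ≤ z₁ := by omega
    have hz₂1 : z₂ = 1 := by nlinarith
    have hnotin := high (β - α) hwK hwpos
    have h3 : z₁ ≤ 3 := by
      rw [hz₂1, mul_one] at hprod; exact hprod
    have h23 : z₁ = 2 ∨ z₁ = 3 := by omega
    rcases h23 with h2 | h2
    · have hr := hRS.reflect_mem β hβRs α hαRs
      have hcoef : 2 * ⟪α, β⟫ / ⟪β, β⟫ = 2 := by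
        rw [e₁, h2]; push_cast
        rw [mul_div_assoc, div_self (ne_of_gt hB), mul_one]
      rw [hcoef] at hr
      have hneg := hRS.neg_mem _ hr
      have he : -(α - (2:ℝ) • β) = β + (β - α) := by
        rw [two_smul]; abel
      rw [he] at hneg
      exact hnotin hneg
    · have h2a : 2 * ⟪α, β⟫ = 3 * ⟪β, β⟫ := by
        rw [e₁, h2]; push_cast; ring
      have hAa : ⟪α, α⟫ = 2 * ⟪α, β⟫ := by
        rw [e₂, hz₂1]; push_cast; ring
      have hww : ⟪β - α, β - α⟫ = ⟪β, β⟫ := by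
        rw [inner_sub_left, inner_sub_right, inner_sub_right, real_inner_comm α β]
        linarith
      have hbw : ⟪β, β - α⟫ = -(⟪β, β⟫ / 2) := by
        rw [inner_sub_right, real_inner_comm α β]
        linarith
      have hr := hRS.reflect_mem (β - α) hwRs β hβRs
      have hcoef : 2 * ⟪β, β - α⟫ / ⟪β - α, β - α⟫ = -1 := by
        rw [hbw, hww]
        rw [div_eq_iff (ne_of_gt hB)]; ring
      rw [hcoef] at hr
      have he : β - (-1 : ℝ) • (β - α) = β + (β - α) := by
        rw [neg_one_smul]; abel
      rw [he] at hr
      exact hnotin hr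
  refine ⟨?_, hαpos, hwK, hwpos⟩
  rw [e₁, hz₁1]; push_cast; ring

lemma dom (hRS : IsRootSystem Rs) (hpos : IsPositiveSystem Rs pos) {β α : V}
    (hK : CascadeSub Rs pos K) (hb : IsHighestRoot Rs pos K β)
    (hα : α ∈ K) (hp : α ∈ pos) : 0 ≤ ⟪α, β⟫ := by
  by_contra hc
  push_neg at hc
  have hαRs : α ∈ Rs := cascade_subset hK hα
  rcases root_add_mem hRS hαRs (cascade_subset hK hb.1) hc with he | hm
  · have h1 := (hpos.pos_iff α hαRs).mp hp
    have : -α = β := by rw [he, neg_neg]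
    rw [this] at h1
    exact h1 hb.2.1
  · have := hb.2.2 α hα hp
    rw [add_comm] at this
    exact this hm

lemma chain_link (hRS : IsRootSystem Rs) (hK : CascadeSub Rs pos K) {a b : V}
    (haK : a ∈ K) (h : Relation.ReflTransGen (Linked K) a b) :
    ∃ u, u ∈ K ∧ ⟪u, a⟫ ≠ 0 ∧ ⟪u, b⟫ ≠ 0 := by
  induction h with
  | refl =>
    have ha0 : ⟪a, a⟫ ≠ 0 := inner_self_ne_zero.mpr (mem_ne_zero hRS (cascade_subset hK haK))
    exact ⟨a, haK, ha0, ha0⟩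
  | @tail c d h1 h2 ih =>
    obtain ⟨hcK, hdK, hcd⟩ := h2
    by_cases hca : ⟪c, a⟫ = 0
    · obtain ⟨u, huK, hua, huc⟩ := ih
      by_cases hud : ⟪u, d⟫ = 0
      · have hcRs : c ∈ Rs := cascade_subset hK hcK
        have huRs : u ∈ Rs := cascade_subset hK huK
        have hCC : 0 < ⟪c, c⟫ := inner_self_pos' hRS hcRs
        set t : ℝ := 2 * ⟪u, c⟫ / ⟪c, c⟫ with ht
        have htne : t ≠ 0 := by
          rw [ht]
          exact div_ne_zero (by simpa using huc) (ne_of_gt hCC)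
        have hyRs : u - t • c ∈ Rs := hRS.reflect_mem c hcRs u huRs
        have hya : ⟪u - t • c, a⟫ ≠ 0 := by
          rw [inner_sub_left, real_inner_smul_left, hca, mul_zero, sub_zero]
          exact hua
        have hyd : ⟪u - t • c, d⟫ ≠ 0 := by
          rw [inner_sub_left, real_inner_smul_left, hud, zero_sub, neg_ne_zero]
          exact mul_ne_zero htne hcd
        have hyK : u - t • c ∈ K := by
          refine cascade_span_mem hRS hK _ hyRs
            (sub_mem (Submodule.subset_span huK) (Submodule.smul_mem _ t (Submodule.subset_span hcK)))
            a haK ?_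
          rw [real_inner_comm]
          exact hya
        exact ⟨u - t • c, hyK, hya, hyd⟩
      · exact ⟨u, huK, hua, hud⟩
    · exact ⟨c, hcK, hca, hcd⟩

lemma highest_unique (hRS : IsRootSystem Rs) (hpos : IsPositiveSystem Rs pos) {β₁ β₂ : V}
    (hK : CascadeSub Rs pos K) (h1 : IsHighestRoot Rs pos K β₁)
    (h2 : IsHighestRoot Rs pos K β₂) : β₁ = β₂ := by
  by_contra hne
  have hKRs := cascade_subset hK
  have hβ₁Rs : β₁ ∈ Rs := hKRs h1.1
  have hβ₂Rs : β₂ ∈ Rs := hKRs h2.1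
  rcases lt_trichotomy (⟪β₁, β₂⟫) 0 with hlt | heq | hgt
  · rcases root_add_mem hRS hβ₁Rs hβ₂Rs hlt with he | hm
    · have hn := (hpos.pos_iff β₂ hβ₂Rs).mp h2.2.1
      rw [← he] at hn
      exact hn h1.2.1
    · have := h2.2.2 β₁ h1.1 h1.2.1
      rw [add_comm] at this
      exact this hm
  · obtain ⟨u, huK, hu1, hu2⟩ := chain_link hRS hK h1.1 (cascade_conn hK h1.1 h2.1)
    obtain ⟨w, hwK, hwpos, hw1, hw2⟩ :
        ∃ w, w ∈ K ∧ w ∈ pos ∧ ⟪w, β₁⟫ ≠ 0 ∧ ⟪w, β₂⟫ ≠ 0 := by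
      by_cases hu : u ∈ pos
      · exact ⟨u, huK, hu, hu1, hu2⟩
      · have huRs := cascade_subset hK huK
        have hnu : -u ∈ pos := by
          have hiff := hpos.pos_iff (-u) (hRS.neg_mem u huRs)
          rw [neg_neg] at hiff
          exact hiff.mpr hu
        exact ⟨-u, cascade_neg hRS hK u huK, hnu,
          by rw [inner_neg_left, neg_ne_zero]; exact hu1,
          by rw [inner_neg_left, neg_ne_zero]; exact hu2⟩
    have hd1 : 0 < ⟪w, β₁⟫ := lt_of_le_of_ne (dom hRS hpos hK h1 hwK hwpos) (Ne.symm hw1)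
    have hd2 : 0 < ⟪w, β₂⟫ := lt_of_le_of_ne (dom hRS hpos hK h2 hwK hwpos) (Ne.symm hw2)
    have hwne : w ≠ β₂ := by
      intro he
      apply hw1
      rw [he, real_inner_comm]
      exact heq
    obtain ⟨_, _, hvK, hvpos⟩ := main_claim hRS hpos hK h2 hwK hd2 hwne
    have hge := dom hRS hpos hK h1 hvK hvpos
    rw [inner_sub_left] at hge
    have hc : ⟪β₂, β₁⟫ = 0 := by rw [real_inner_comm]; exact heq
    linarith
  · obtain ⟨_, _, hvK, hvpos⟩ := main_claim hRS hpos hK h2 h1.1 hgt hne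
    have hnot := h1.2.2 _ hvK hvpos
    have he : β₁ + (β₂ - β₁) = β₂ := by abel
    rw [he] at hnot
    exact hnot hβ₂Rs

/-! ### Laminarity of cascade subsystems -/

lemma cascade_in_component (hK : CascadeSub Rs pos K) {C : Set V} (hC : IsComponent Rs C) :
    ∀ x ∈ K, x ∈ C → K ⊆ C := by
  induction hK with
  | base C' hC' =>
    intro x hxK hxC
    rw [comp_unique hC' hC hxK hxC]
  | step K' C' β hK' hb hC' ih =>
    intro x hxK hxC y hy
    exact ih x (comp_subset hC' hxK).1 hxC (comp_subset hC' hy).1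

lemma cascade_top (hK : CascadeSub Rs pos K) : ∃ C, IsComponent Rs C ∧ K ⊆ C := by
  induction hK with
  | base C hC => exact ⟨C, hC, subset_rfl⟩
  | step K' C β hK' hb hC ih =>
    obtain ⟨C₀, hC₀, hsub⟩ := ih
    exact ⟨C₀, hC₀, fun y hy => hsub (comp_subset hC hy).1⟩

/-- Depth-indexed version of `CascadeSub`, used for the well-founded laminarity argument. -/
inductive CascadeSubN (Rs pos : Set V) : ℕ → Set V → Prop
  | base (C : Set V) : IsComponent Rs C → CascadeSubN Rs pos 0 C
  | step (n : ℕ) (K C : Set V) (β : V) : CascadeSubN Rs pos n K → IsHighestRoot Rs pos K β →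
      IsComponent {α ∈ K | ⟪α, β⟫ = 0} C → CascadeSubN Rs pos (n + 1) C

lemma cascadeN_of (h : CascadeSub Rs pos K) : ∃ n, CascadeSubN Rs pos n K := by
  induction h with
  | base C hC => exact ⟨0, .base C hC⟩
  | step K C β hK hb hC ih =>
    obtain ⟨n, hn⟩ := ih
    exact ⟨n + 1, .step n K C β hn hb hC⟩

lemma cascade_ofN {n : ℕ} (h : CascadeSubN Rs pos n K) : CascadeSub Rs pos K := by
  induction h with
  | base C hC => exact .base C hC
  | step n K C β hK hb hC ih => exact .step K C β ih hb hC

lemma cascade_PO (hRS : IsRootSystem Rs) (hpos : IsPositiveSystem Rs pos) :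
    ∀ N n₁ n₂ (K₁ K₂ : Set V), n₁ + n₂ ≤ N →
      CascadeSubN Rs pos n₁ K₁ → CascadeSubN Rs pos n₂ K₂ →
      ((∃ x, x ∈ K₁ ∧ x ∈ K₂) → K₁ ⊆ K₂ ∨ K₂ ⊆ K₁) ∧
      (K₁ ⊆ K₂ → ∀ β₂, IsHighestRoot Rs pos K₂ β₂ → K₁ = K₂ ∨ ∀ y ∈ K₁, ⟪y, β₂⟫ = 0) := by
  intro N
  induction N with
  | zero =>
    intro n₁ n₂ K₁ K₂ hle h₁ h₂
    have hn₁ : n₁ = 0 := by omega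
    have hn₂ : n₂ = 0 := by omega
    subst hn₁; subst hn₂
    cases h₁ with | base C₁ hC₁ =>
    cases h₂ with | base C₂ hC₂ =>
    constructor
    · rintro ⟨x, hx₁, hx₂⟩
      exact Or.inl (by rw [comp_unique hC₁ hC₂ hx₁ hx₂])
    · intro hsub β₂ _
      obtain ⟨a, ha⟩ := comp_nonempty hC₁
      exact Or.inl (comp_unique hC₁ hC₂ ha (hsub ha))
  | succ N ih =>
    intro n₁ n₂ K₁ K₂ hle h₁ h₂
    constructor
    · -- comparability
      rintro ⟨x, hx₁, hx₂⟩
      cases h₂ with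
      | base C₂ hC₂ =>
        exact Or.inl (cascade_in_component (cascade_ofN h₁) hC₂ x hx₁ hx₂)
      | step m₂ K₂' C₂' β₂ hK₂' hb₂ hC₂ =>
        have h₂' : CascadeSub Rs pos K₂ :=
          .step K₂' K₂ β₂ (cascade_ofN hK₂') hb₂ hC₂
        cases h₁ with
        | base C₁ hC₁ =>
          exact Or.inr (cascade_in_component h₂' hC₁ x hx₂ hx₁)
        | step m₁ K₁' C₁' β₁ hK₁' hb₁ hC₁ =>
          have h₁N : CascadeSubN Rs pos (m₁ + 1) K₁ := .step m₁ K₁' K₁ β₁ hK₁' hb₁ hC₁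
          have h₁' : CascadeSub Rs pos K₁ := cascade_ofN h₁N
          have hxK₂' : x ∈ K₂' := (comp_subset hC₂ hx₂).1
          have IH := ih (m₁ + 1) m₂ K₁ K₂' (by omega) h₁N hK₂'
          rcases IH.1 ⟨x, hx₁, hxK₂'⟩ with hsub | hsub
          · rcases IH.2 hsub β₂ hb₂ with heqK | horth
            · refine Or.inr fun y hy => ?_
              rw [heqK]
              exact (comp_subset hC₂ hy).1
            · refine Or.inl (conn_sub hC₂ h₁' ?_ hx₁ hx₂)
              exact fun y hy => ⟨hsub hy, horth y hy⟩
          · exact Or.inr fun y hy => hsub (comp_subset hC₂ hy).1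
    · -- orthogonality / equality
      intro hsub β₂ hb₂
      cases h₁ with
      | base C₁ hC₁ =>
        obtain ⟨C, hC, hsub₂⟩ := cascade_top (cascade_ofN h₂)
        obtain ⟨a, haC₁⟩ := comp_nonempty hC₁
        have heqC : K₁ = C := comp_unique hC₁ hC haC₁ (hsub₂ (hsub haC₁))
        refine Or.inl (Set.Subset.antisymm hsub ?_)
        rw [heqC]
        exact hsub₂
      | step m₁ K₁' C₁' β₁ hK₁' hb₁ hC₁ =>
        obtain ⟨x, hxC₁⟩ := comp_nonempty hC₁
        have hxK₁' : x ∈ K₁' := (comp_subset hC₁ hxC₁).1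
        have hxK₂ : x ∈ K₂ := hsub hxC₁
        have IHa := ih m₁ n₂ K₁' K₂ (by omega) hK₁' h₂
        rcases IHa.1 ⟨x, hxK₁', hxK₂⟩ with hs | hs
        · rcases IHa.2 hs β₂ hb₂ with heqK | horth
          · have hb₂' : IsHighestRoot Rs pos K₁' β₂ := by rw [heqK]; exact hb₂
            have huniq : β₁ = β₂ := highest_unique hRS hpos (cascade_ofN hK₁') hb₁ hb₂'
            refine Or.inr fun y hy => ?_
            rw [← huniq]
            exact (comp_subset hC₁ hy).2
          · exact Or.inr fun y hy => horth y (comp_subset hC₁ hy).1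
        · have IHb := ih n₂ m₁ K₂ K₁' (by omega) h₂ hK₁'
          rcases IHb.2 hs β₁ hb₁ with heqK | horth
          · have hb₁' : IsHighestRoot Rs pos K₂ β₁ := by rw [heqK]; exact hb₁
            have huniq : β₂ = β₁ := highest_unique hRS hpos (cascade_ofN h₂) hb₂ hb₁'
            refine Or.inr fun y hy => ?_
            rw [huniq]
            exact (comp_subset hC₁ hy).2
          · have hKsub : K₂ ⊆ K₁ :=
              conn_sub hC₁ (cascade_ofN h₂) (fun y hy => ⟨hs hy, horth y hy⟩) hxK₂ hxC₁
            exact Or.inl (Set.Subset.antisymm hsub hKsub)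

lemma cascade_laminar (hRS : IsRootSystem Rs) (hpos : IsPositiveSystem Rs pos) {K₁ K₂ : Set V}
    (h₁ : CascadeSub Rs pos K₁) (h₂ : CascadeSub Rs pos K₂) {x : V}
    (hx₁ : x ∈ K₁) (hx₂ : x ∈ K₂) : K₁ ⊆ K₂ ∨ K₂ ⊆ K₁ := by
  obtain ⟨n₁, hn₁⟩ := cascadeN_of h₁
  obtain ⟨n₂, hn₂⟩ := cascadeN_of h₂
  exact (cascade_PO hRS hpos (n₁ + n₂) n₁ n₂ K₁ K₂ le_rfl hn₁ hn₂).1 ⟨x, hx₁, hx₂⟩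

/-! ### Final argument -/

lemma final_helper (hRS : IsRootSystem Rs) (hpos : IsPositiveSystem Rs pos) {β γ δ : V}
    (hK : CascadeSub Rs pos K) (hb : IsHighestRoot Rs pos K β) (hγ : γ ∈ K) (hδ : δ ∈ K)
    (hγβ : 0 < ⟪γ, β⟫) (hδβ : 0 < ⟪δ, β⟫) (hroot : γ + δ ∈ Rs) : γ + δ = β := by
  have hβRs : β ∈ Rs := cascade_subset hK hb.1
  have hB : 0 < ⟪β, β⟫ := inner_self_pos' hRS hβRs
  have hsum : ⟪γ + δ, β⟫ = ⟪γ, β⟫ + ⟪δ, β⟫ := inner_add_left γ δ β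
  have hεβ : 0 < ⟪γ + δ, β⟫ := by rw [hsum]; linarith
  have hεK : γ + δ ∈ K :=
    cascade_span_mem hRS hK _ hroot
      (add_mem (Submodule.subset_span hγ) (Submodule.subset_span hδ)) β hb.1
      (by rw [real_inner_comm]; exact ne_of_gt hεβ)
  by_contra hne
  obtain ⟨hε1, -, -, -⟩ := main_claim hRS hpos hK hb hεK hεβ hne
  have hγ1 : ⟪β, β⟫ ≤ 2 * ⟪γ, β⟫ := by
    by_cases h : γ = β
    · rw [h]; linarith
    · obtain ⟨he, -, -, -⟩ := main_claim hRS hpos hK hb hγ hγβ h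
      linarith
  have hδ1 : ⟪β, β⟫ ≤ 2 * ⟪δ, β⟫ := by
    by_cases h : δ = β
    · rw [h]; linarith
    · obtain ⟨he, -, -, -⟩ := main_claim hRS hpos hK hb hδ hδβ h
      linarith
  linarith

/-- If `γ, δ ∈ H_β` for an element `β` of the Kostant cascade and
`γ + δ` is a root, then `γ + δ = β`. -/
theorem statement_2 (Rs pos : Set V) (hRS : IsRootSystem Rs)
    (hpos : IsPositiveSystem Rs pos) (γ δ β : V) (hβ : β ∈ cascadeSet Rs pos)
    (hγ : γ ∈ cascadeH Rs pos β) (hδ : δ ∈ cascadeH Rs pos β) (hroot : γ + δ ∈ Rs) :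
    γ + δ = β := by
  obtain ⟨K₁, hK₁, hb₁, hγK, hγβ⟩ := hγ
  obtain ⟨K₂, hK₂, hb₂, hδK, hδβ⟩ := hδ
  rcases cascade_laminar hRS hpos hK₁ hK₂ hb₁.1 hb₂.1 with hs | hs
  · exact final_helper hRS hpos hK₂ hb₂ (hs hγK) hδK hγβ hδβ hroot
  · exact final_helper hRS hpos hK₁ hb₁ hγK (hs hδK) hγβ hδβ hroot
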